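/- Let X = [0,1] and define the Markov kernel P by P(0,dy) = dy (Lebesgue measure on [0,1]) and, for x ∈ (0,1], P(x,dy) = c(x)(1 + sin(y/x)) dy, where c(x) = (1 + x(1 − cos(1/x)))^{−1} is the normalising constant making P(x,·) a probability measure. Then P is strong Feller, but lim_{x → 0+} ‖P(x,·) − P(0,·)‖_TV = 2/π; in particular, P is not ultra Feller. -/

import Mathlib

open MeasureTheory Filter
open scoped ENNReal Topology

/-- The total variation distance between two finite measures: the total mass of the
variation `|μ − ν|`, computed as the supremum over measurable sets `A` of
`(μ(A) − ν(A)) + (ν(Aᶜ) − μ(Aᶜ))`. -/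
noncomputable def tvDist {α : Type*} [MeasurableSpace α] (μ ν : Measure α) : ℝ≥0∞ :=
  ⨆ (A : Set α) (_ : MeasurableSet A), (μ A - ν A) + (ν Aᶜ - μ Aᶜ)

/-- The kernel on `X = [0,1]`: `P(0,dy) = dy` and, for `x ≠ 0`,
`P(x,dy) = c(x) (1 + sin(y/x)) dy` on `[0,1]`, with `c(x) = (1 + x(1 − cos(1/x)))⁻¹`. -/
noncomputable def exampleKernel (x : ℝ) : Measure ℝ :=
  if x = 0 then volume.restrict (Set.Icc 0 1)
  else (volume.restrict (Set.Icc 0 1)).withDensity fun y =>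
    ENNReal.ofReal ((1 + x * (1 - Real.cos (1 / x)))⁻¹ * (1 + Real.sin (y / x)))

open scoped FourierTransform

/-- The density of `exampleKernel x` (for `x ≠ 0`). -/
noncomputable def exDens (x y : ℝ) : ℝ :=
  (1 + x * (1 - Real.cos (1 / x)))⁻¹ * (1 + Real.sin (y / x))

/-- The normalizing factor `c(x)`. -/
noncomputable def exC (x : ℝ) : ℝ := (1 + x * (1 - Real.cos (1 / x)))⁻¹

lemma exDens_eq (x y : ℝ) : exDens x y = exC x * (1 + Real.sin (y / x)) := rfl

lemma exampleKernel_ne (x : ℝ) (hx : x ≠ 0) :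
    exampleKernel x = (volume.restrict (Set.Icc 0 1)).withDensity
      fun y => ENNReal.ofReal (exDens x y) := if_neg hx

lemma exampleKernel_zero : exampleKernel 0 = volume.restrict (Set.Icc 0 1) := if_pos rfl

lemma denom_pos {x : ℝ} (hx : 0 ≤ x) : 0 < 1 + x * (1 - Real.cos (1/x)) := by
  nlinarith [Real.cos_le_one (1/x), mul_nonneg hx (sub_nonneg.2 (Real.cos_le_one (1/x)))]

lemma denom_one_le {x : ℝ} (hx : 0 ≤ x) : 1 ≤ 1 + x * (1 - Real.cos (1/x)) := by
  nlinarith [Real.cos_le_one (1/x)]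

lemma exC_pos {x : ℝ} (hx : 0 ≤ x) : 0 < exC x := inv_pos.2 (denom_pos hx)

lemma exC_le_one {x : ℝ} (hx : 0 ≤ x) : exC x ≤ 1 :=
  inv_le_one_of_one_le₀ (denom_one_le hx)

lemma exDens_nonneg {x : ℝ} (hx : 0 ≤ x) (y : ℝ) : 0 ≤ exDens x y :=
  mul_nonneg (exC_pos hx).le (by nlinarith [Real.neg_one_le_sin (y/x)])

lemma exDens_le_two {x : ℝ} (hx : 0 ≤ x) (y : ℝ) : exDens x y ≤ 2 := by
  have h1 : (1 : ℝ) + Real.sin (y/x) ≤ 2 := by nlinarith [Real.sin_le_one (y/x)]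
  have h2 : (0:ℝ) ≤ 1 + Real.sin (y/x) := by nlinarith [Real.neg_one_le_sin (y/x)]
  calc exDens x y ≤ 1 * (1 + Real.sin (y/x)) :=
        mul_le_mul_of_nonneg_right (exC_le_one hx) h2
    _ ≤ 2 := by linarith

lemma exDens_continuous (x : ℝ) : Continuous fun y => exDens x y := by
  unfold exDens; fun_prop

lemma exC_continuousAt {x₀ : ℝ} (h0 : x₀ ≠ 0) (hge : 0 ≤ x₀) : ContinuousAt exC x₀ := by
  have h1 : ContinuousAt (fun x : ℝ => 1 + x * (1 - Real.cos (1/x))) x₀ := by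
    apply continuousAt_const.add
    apply continuousAt_id.mul
    exact continuousAt_const.sub
      (Real.continuous_cos.continuousAt.comp (continuousAt_const.div continuousAt_id h0))
  exact h1.inv₀ (denom_pos hge).ne'

lemma exDens_continuousAt (y : ℝ) {x₀ : ℝ} (h0 : x₀ ≠ 0) (hge : 0 ≤ x₀) :
    ContinuousAt (fun x => exDens x y) x₀ := by
  apply (exC_continuousAt h0 hge).mul
  exact continuousAt_const.add
    (Real.continuous_sin.continuousAt.comp (continuousAt_const.div continuousAt_id h0))

lemma exC_tendsto : Tendsto exC (𝓝[>] (0:ℝ)) (𝓝 1) := by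
  have hden : Tendsto (fun x : ℝ => 1 + x * (1 - Real.cos (1/x))) (𝓝[>] (0:ℝ)) (𝓝 1) := by
    have key : Tendsto (fun x : ℝ => x * (1 - Real.cos (1/x))) (𝓝[>] (0:ℝ)) (𝓝 0) := by
      have h2x : Tendsto (fun x : ℝ => 2 * x) (𝓝[>] (0:ℝ)) (𝓝 0) := by
        have : Tendsto (fun x : ℝ => 2 * x) (𝓝 (0:ℝ)) (𝓝 (2 * 0)) :=
          (continuous_const.mul continuous_id).tendsto 0
        simpa using this.mono_left nhdsWithin_le_nhds
      apply squeeze_zero' ?_ ?_ h2x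
      · filter_upwards [self_mem_nhdsWithin] with x hx
        have hx0 : (0:ℝ) < x := hx
        nlinarith [Real.cos_le_one (1/x)]
      · filter_upwards [self_mem_nhdsWithin] with x hx
        have hx0 : (0:ℝ) < x := hx
        nlinarith [Real.neg_one_le_cos (1/x)]
    simpa using tendsto_const_nhds.add key
  have h := hden.inv₀ one_ne_zero
  rw [inv_one] at h
  exact h

/-- Riemann-Lebesgue for sine. -/
lemma rl_sin (F : ℝ → ℝ) (hF : Integrable F) :
    Tendsto (fun w : ℝ => ∫ v, F v * Real.sin (2 * Real.pi * v * w)) atTop (𝓝 0) := by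
  have hle : (atTop : Filter ℝ) ≤ cocompact ℝ := by
    rw [cocompact_eq_atBot_atTop]; exact le_sup_right
  have h0 := (Real.tendsto_integral_exp_smul_cocompact (fun v => (F v : ℂ))).mono_left hle
  have h1 : Tendsto (fun w : ℝ => (∫ v : ℝ, 𝐞 (-(v * w)) • (F v : ℂ)).im) atTop (𝓝 0) := by
    have := (Complex.continuous_im.tendsto 0).comp h0
    simpa [Function.comp_def] using this
  have h2 := h1.neg
  rw [neg_zero] at h2
  refine h2.congr fun w => ?_
  have hint : Integrable (fun v : ℝ => 𝐞 (-(v * w)) • (F v : ℂ)) :=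
    by simpa [mul_comm] using (Real.fourierIntegral_convergent_iff w).2 (hF.ofReal (𝕜 := ℂ))
  rw [show (∫ v : ℝ, 𝐞 (-(v * w)) • (F v : ℂ)).im
      = ∫ v : ℝ, (𝐞 (-(v * w)) • (F v : ℂ)).im from
    (Complex.imCLM.integral_comp_comm hint).symm]
  rw [← integral_neg]
  congr 1 with v
  rw [Circle.smul_def, Real.fourierChar_apply]
  simp only [smul_eq_mul, Complex.mul_im, Complex.exp_ofReal_mul_I_im,
    Complex.exp_ofReal_mul_I_re, Complex.ofReal_im, Complex.ofReal_re, mul_neg, Real.sin_neg]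
  ring_nf

lemma rl_sin_div (F : ℝ → ℝ) (hF : Integrable F) :
    Tendsto (fun x : ℝ => ∫ v, F v * Real.sin (v / x)) (𝓝[>] (0:ℝ)) (𝓝 0) := by
  have ht : Tendsto (fun x : ℝ => (2 * Real.pi * x)⁻¹) (𝓝[>] (0:ℝ)) atTop := by
    apply tendsto_inv_nhdsGT_zero.comp
    apply tendsto_nhdsWithin_of_tendsto_nhds_of_eventually_within
    · have : Tendsto (fun x : ℝ => 2 * Real.pi * x) (𝓝 (0:ℝ)) (𝓝 (2 * Real.pi * 0)) :=
        (continuous_const.mul continuous_id).tendsto 0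
      simpa using this.mono_left nhdsWithin_le_nhds
    · filter_upwards [self_mem_nhdsWithin] with x hx
      have : (0:ℝ) < x := hx
      have hpi := Real.pi_pos
      exact Set.mem_Ioi.2 (by positivity)
  have := (rl_sin F hF).comp ht
  apply this.congr'
  filter_upwards [self_mem_nhdsWithin] with x hx
  have hx0 : (0:ℝ) < x := hx
  show ∫ v, F v * Real.sin (2 * Real.pi * v * (2 * Real.pi * x)⁻¹) = _
  refine congrArg (fun g : ℝ → ℝ => ∫ v, g v) (funext fun v => ?_)
  rw [show 2 * Real.pi * v * (2 * Real.pi * x)⁻¹ = v / x by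
    rw [div_eq_mul_inv, mul_inv]
    field_simp [Real.pi_ne_zero]]

lemma prob (x : ℝ) (hx : x ∈ Set.Icc (0:ℝ) 1) : IsProbabilityMeasure (exampleKernel x) := by
  constructor
  rcases eq_or_ne x 0 with rfl | hx0
  · simp [exampleKernel, Real.volume_Icc]
  · have hxpos : 0 < x := lt_of_le_of_ne hx.1 (Ne.symm hx0)
    rw [exampleKernel_ne x hx0, withDensity_apply _ MeasurableSet.univ, Measure.restrict_univ]
    have hint : IntegrableOn (fun y => exDens x y) (Set.Icc (0:ℝ) 1) volume :=
      (exDens_continuous x).integrableOn_Icc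
    rw [← ofReal_integral_eq_lintegral_ofReal hint
      (Filter.Eventually.of_forall fun y => exDens_nonneg hxpos.le y)]
    have : ∫ y in Set.Icc (0:ℝ) 1, exDens x y = 1 := by
      unfold exDens
      rw [MeasureTheory.integral_Icc_eq_integral_Ioc,
        ← intervalIntegral.integral_of_le (by norm_num : (0:ℝ) ≤ 1),
        intervalIntegral.integral_const_mul]
      have h1 : ∫ y in (0:ℝ)..1, (1 + Real.sin (y / x)) =
          1 + x * (1 - Real.cos (1/x)) := by
        rw [intervalIntegral.integral_add intervalIntegrable_const
          (by apply Continuous.intervalIntegrable; fun_prop)]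
        rw [intervalIntegral.integral_comp_div (f := Real.sin) hx0, integral_sin]
        simp [Real.cos_zero]
      rw [h1, inv_mul_cancel₀ (denom_pos hxpos.le).ne']
    rw [this, ENNReal.ofReal_one]

lemma abs_sin_periodic : Function.Periodic (fun u => |Real.sin u|) Real.pi := fun x => by
  simp [Real.sin_add_pi]

lemma abs_sin_intInt : ∀ t₁ t₂ : ℝ, IntervalIntegrable (fun u => |Real.sin u|)
    MeasureSpace.volume t₁ t₂ := fun t₁ t₂ =>
  (Real.continuous_sin.abs).intervalIntegrable t₁ t₂

lemma integral_abs_sin_pi : ∫ u in (0:ℝ)..Real.pi, |Real.sin u| = 2 := by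
  rw [intervalIntegral.integral_congr (g := Real.sin) ?_, integral_sin]
  · rw [Real.cos_pi, Real.cos_zero]; norm_num
  · intro u hu
    rw [Set.uIcc_of_le Real.pi_pos.le] at hu
    exact abs_of_nonneg (Real.sin_nonneg_of_nonneg_of_le_pi hu.1 hu.2)

lemma tendsto_avg_abs_sin :
    Tendsto (fun x : ℝ => x * ∫ u in (0:ℝ)..(1/x), |Real.sin u|)
      (𝓝[>] (0:ℝ)) (𝓝 (2 / Real.pi)) := by
  set Φ : ℝ → ℝ := fun t => ∫ u in (0:ℝ)..t, |Real.sin u| with hΦ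
  set m : ℝ := sInf (Φ '' Set.Icc 0 Real.pi) with hm
  set M : ℝ := sSup (Φ '' Set.Icc 0 Real.pi) with hM
  have hpi := Real.pi_pos
  have hlow : ∀ t : ℝ, m + ⌊t / Real.pi⌋ • (2:ℝ) ≤ Φ t := by
    intro t
    have := abs_sin_periodic.sInf_add_zsmul_le_integral_of_pos (abs_sin_intInt 0 Real.pi) hpi t
    rwa [integral_abs_sin_pi] at this
  have hup : ∀ t : ℝ, Φ t ≤ M + ⌊t / Real.pi⌋ • (2:ℝ) := by
    intro t
    have := abs_sin_periodic.integral_le_sSup_add_zsmul_of_pos (abs_sin_intInt 0 Real.pi) hpi t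
    rwa [integral_abs_sin_pi] at this
  -- squeeze
  have hlo : Tendsto (fun x : ℝ => x * m + (2 / Real.pi - 2 * x)) (𝓝[>] (0:ℝ))
      (𝓝 (2 / Real.pi)) := by
    have : Tendsto (fun x : ℝ => x * m + (2 / Real.pi - 2 * x)) (𝓝 (0:ℝ))
        (𝓝 (0 * m + (2 / Real.pi - 2 * 0))) :=
      ((continuous_id.mul continuous_const).add
        (continuous_const.sub (continuous_const.mul continuous_id))).tendsto 0
    simpa using this.mono_left nhdsWithin_le_nhds
  have hhi : Tendsto (fun x : ℝ => x * M + 2 / Real.pi) (𝓝[>] (0:ℝ)) (𝓝 (2 / Real.pi)) := by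
    have : Tendsto (fun x : ℝ => x * M + 2 / Real.pi) (𝓝 (0:ℝ))
        (𝓝 (0 * M + 2 / Real.pi)) :=
      ((continuous_id.mul continuous_const).add continuous_const).tendsto 0
    simpa using this.mono_left nhdsWithin_le_nhds
  refine tendsto_of_tendsto_of_tendsto_of_le_of_le' hlo hhi ?_ ?_
  · filter_upwards [self_mem_nhdsWithin] with x hx
    have hx0 : (0:ℝ) < x := hx
    have h1 : m + (⌊(1/x) / Real.pi⌋ : ℝ) * 2 ≤ Φ (1/x) := by
      simpa [zsmul_eq_mul] using hlow (1/x)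
    have hfl : (1/x) / Real.pi - 1 < (⌊(1/x) / Real.pi⌋ : ℝ) := Int.sub_one_lt_floor _
    have e1 : x * (m + (⌊(1/x) / Real.pi⌋ : ℝ) * 2) ≤ x * Φ (1/x) :=
      mul_le_mul_of_nonneg_left h1 hx0.le
    rw [mul_add, ← mul_assoc] at e1
    have e2 : x * ((1/x) / Real.pi - 1) < x * (⌊(1/x) / Real.pi⌋ : ℝ) :=
      mul_lt_mul_of_pos_left hfl hx0
    have e3 : x * ((1/x) / Real.pi - 1) = 1 / Real.pi - x := by field_simp
    rw [e3] at e2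
    have e4 : 2 / Real.pi = 2 * (1 / Real.pi) := by ring
    nlinarith [e1, e2]
  · filter_upwards [self_mem_nhdsWithin] with x hx
    have hx0 : (0:ℝ) < x := hx
    have h1 : Φ (1/x) ≤ M + (⌊(1/x) / Real.pi⌋ : ℝ) * 2 := by
      simpa [zsmul_eq_mul] using hup (1/x)
    have hfl : (⌊(1/x) / Real.pi⌋ : ℝ) ≤ (1/x) / Real.pi := Int.floor_le _
    have hxmul : x * ((1/x) / Real.pi) = 1 / Real.pi := by field_simp
    have e1 : x * Φ (1/x) ≤ x * (M + (⌊(1/x) / Real.pi⌋ : ℝ) * 2) :=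
      mul_le_mul_of_nonneg_left h1 hx0.le
    rw [mul_add, ← mul_assoc] at e1
    have e2 : x * (⌊(1/x) / Real.pi⌋ : ℝ) ≤ 1 / Real.pi := by
      have := mul_le_mul_of_nonneg_left hfl hx0.le
      rwa [hxmul] at this
    have e4 : 2 / Real.pi = 2 * (1 / Real.pi) := by ring
    nlinarith [e1, e2]

lemma ofReal_le_ofReal_add_ofReal_sub (a b : ℝ) :
    ENNReal.ofReal a ≤ ENNReal.ofReal b + ENNReal.ofReal (a - b) := by
  rcases le_total a b with h | h
  · exact le_trans (ENNReal.ofReal_le_ofReal h) le_self_add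
  · rcases le_total b 0 with hb | hb
    · exact le_trans (ENNReal.ofReal_le_ofReal (by linarith)) le_add_self
    · rw [← ENNReal.ofReal_add hb (by linarith)]
      exact ENNReal.ofReal_le_ofReal (by linarith)

lemma ofReal_add_ofReal_neg (a : ℝ) :
    ENNReal.ofReal a + ENNReal.ofReal (-a) = ENNReal.ofReal |a| := by
  rcases le_total 0 a with h | h
  · rw [ENNReal.ofReal_eq_zero.2 (by linarith : -a ≤ 0), add_zero, abs_of_nonneg h]
  · rw [ENNReal.ofReal_eq_zero.2 h, zero_add, abs_of_nonpos h]

lemma tvDist_eq {x : ℝ} (hx : 0 < x) :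
    tvDist (exampleKernel x) (exampleKernel 0)
      = ENNReal.ofReal (∫ y in Set.Icc (0:ℝ) 1, |exDens x y - 1|) := by
  set ν : Measure ℝ := volume.restrict (Set.Icc 0 1) with hν
  have hνfin : ν Set.univ ≠ ⊤ := by
    simp [hν, Real.volume_Icc]
  have hmg : Measurable fun y => exDens x y := (exDens_continuous x).measurable
  have hkx : exampleKernel x = ν.withDensity (fun y => ENNReal.ofReal (exDens x y)) :=
    exampleKernel_ne x hx.ne'
  have hk0 : exampleKernel 0 = ν := exampleKernel_zero
  have happly : ∀ A : Set ℝ, MeasurableSet A →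
      exampleKernel x A = ∫⁻ y in A, ENNReal.ofReal (exDens x y) ∂ν := by
    intro A hA
    rw [hkx, withDensity_apply _ hA]
  set Pp : ℝ≥0∞ := ∫⁻ y, ENNReal.ofReal (exDens x y - 1) ∂ν with hPp
  set Pm : ℝ≥0∞ := ∫⁻ y, ENNReal.ofReal (1 - exDens x y) ∂ν with hPm
  have key : tvDist (exampleKernel x) (exampleKernel 0) = Pp + Pm := by
    apply le_antisymm
    · apply iSup₂_le
      intro A hA
      have h1 : exampleKernel x A - exampleKernel 0 A ≤ Pp := by
        rw [tsub_le_iff_right, happly A hA, hk0]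
        calc ∫⁻ y in A, ENNReal.ofReal (exDens x y) ∂ν
            ≤ ∫⁻ y in A, (ENNReal.ofReal 1 + ENNReal.ofReal (exDens x y - 1)) ∂ν :=
              lintegral_mono fun y => ofReal_le_ofReal_add_ofReal_sub _ _
          _ = ∫⁻ y in A, (ENNReal.ofReal (exDens x y - 1)) ∂ν + ν A := by
              rw [lintegral_add_left measurable_const]
              simp [add_comm]
          _ ≤ Pp + ν A := by
              gcongr
              exact setLIntegral_le_lintegral _ _
      have h2 : exampleKernel 0 Aᶜ - exampleKernel x Aᶜ ≤ Pm := by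
        rw [tsub_le_iff_right, happly Aᶜ hA.compl, hk0]
        calc ν Aᶜ = ∫⁻ y in Aᶜ, ENNReal.ofReal 1 ∂ν := by simp
          _ ≤ ∫⁻ y in Aᶜ, (ENNReal.ofReal (exDens x y)
                + ENNReal.ofReal (1 - exDens x y)) ∂ν :=
              lintegral_mono fun y => ofReal_le_ofReal_add_ofReal_sub _ _
          _ = ∫⁻ y in Aᶜ, ENNReal.ofReal (1 - exDens x y) ∂ν
                + ∫⁻ y in Aᶜ, ENNReal.ofReal (exDens x y) ∂ν := by
              rw [lintegral_add_left (by fun_prop)]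
              simp [add_comm]
          _ ≤ Pm + ∫⁻ y in Aᶜ, ENNReal.ofReal (exDens x y) ∂ν := by
              gcongr
              exact setLIntegral_le_lintegral _ _
      exact add_le_add h1 h2
    · set A : Set ℝ := {y | 1 ≤ exDens x y} with hAdef
      have hA : MeasurableSet A := measurableSet_le measurable_const hmg
      have hval1 : exampleKernel x A - exampleKernel 0 A = Pp := by
        have hμA : exampleKernel x A = ν A + ∫⁻ y in A, ENNReal.ofReal (exDens x y - 1) ∂ν := by
          rw [happly A hA]
          calc ∫⁻ y in A, ENNReal.ofReal (exDens x y) ∂ν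
              = ∫⁻ y in A, (ENNReal.ofReal 1 + ENNReal.ofReal (exDens x y - 1)) ∂ν := by
                apply setLIntegral_congr_fun hA
                intro y hy
                beta_reduce
                rw [← ENNReal.ofReal_add zero_le_one (by have h1 : (1:ℝ) ≤ exDens x y := hy; linarith)]
                norm_num
            _ = ν A + ∫⁻ y in A, ENNReal.ofReal (exDens x y - 1) ∂ν := by
                rw [lintegral_add_left measurable_const]
                simp
        have hPpA : ∫⁻ y in A, ENNReal.ofReal (exDens x y - 1) ∂ν = Pp := by
          have hsplit := lintegral_add_compl (μ := ν)
            (fun y => ENNReal.ofReal (exDens x y - 1)) hA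
          have hzero : ∫⁻ y in Aᶜ, ENNReal.ofReal (exDens x y - 1) ∂ν = 0 := by
            rw [setLIntegral_congr_fun hA.compl (fun y hy => ?_),
              lintegral_zero]
            rw [ENNReal.ofReal_eq_zero]
            have : ¬ (1 ≤ exDens x y) := hy
            linarith [not_le.1 this]
          rw [hzero, add_zero] at hsplit
          rw [hPp]
          exact hsplit
        rw [hμA, hPpA, hk0]
        exact ENNReal.add_sub_cancel_left (ne_top_of_le_ne_top hνfin (measure_mono (Set.subset_univ _)))
      have hval2 : exampleKernel 0 Aᶜ - exampleKernel x Aᶜ = Pm := by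
        have hνA : (ν Aᶜ : ℝ≥0∞) = exampleKernel x Aᶜ
            + ∫⁻ y in Aᶜ, ENNReal.ofReal (1 - exDens x y) ∂ν := by
          rw [happly Aᶜ hA.compl]
          calc ν Aᶜ = ∫⁻ y in Aᶜ, ENNReal.ofReal 1 ∂ν := by simp
            _ = ∫⁻ y in Aᶜ, (ENNReal.ofReal (exDens x y)
                  + ENNReal.ofReal (1 - exDens x y)) ∂ν := by
                apply setLIntegral_congr_fun hA.compl
                intro y hy
                have h1 : ¬ (1 ≤ exDens x y) := hy
                beta_reduce
                rw [← ENNReal.ofReal_add (exDens_nonneg hx.le y) (by linarith [not_le.1 h1])]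
                norm_num
            _ = _ := by
                rw [lintegral_add_left (by fun_prop)]
        have hPmA : ∫⁻ y in Aᶜ, ENNReal.ofReal (1 - exDens x y) ∂ν = Pm := by
          have hsplit := lintegral_add_compl (μ := ν)
            (fun y => ENNReal.ofReal (1 - exDens x y)) hA
          have hzero : ∫⁻ y in A, ENNReal.ofReal (1 - exDens x y) ∂ν = 0 := by
            rw [setLIntegral_congr_fun hA (fun y hy => ?_),
              lintegral_zero]
            rw [ENNReal.ofReal_eq_zero]
            have : (1:ℝ) ≤ exDens x y := hy
            linarith
          rw [hzero, zero_add] at hsplit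
          rw [hPm]
          exact hsplit
        have hfin : exampleKernel x Aᶜ ≠ ⊤ := by
          apply ne_top_of_le_ne_top (show (ENNReal.ofReal 2) * ν Set.univ ≠ ⊤ from
            ENNReal.mul_ne_top ENNReal.ofReal_ne_top hνfin)
          rw [happly Aᶜ hA.compl]
          calc ∫⁻ y in Aᶜ, ENNReal.ofReal (exDens x y) ∂ν
              ≤ ∫⁻ _ in Aᶜ, ENNReal.ofReal 2 ∂ν :=
                lintegral_mono fun y => ENNReal.ofReal_le_ofReal (exDens_le_two hx.le y)
            _ = ENNReal.ofReal 2 * ν Aᶜ := by rw [setLIntegral_const]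
            _ ≤ _ := mul_le_mul_right (measure_mono (Set.subset_univ _)) _
        rw [hk0, hνA, hPmA]
        exact ENNReal.add_sub_cancel_left hfin
      have hle := le_iSup₂ (f := fun (A : Set ℝ) (_ : MeasurableSet A) =>
        (exampleKernel x A - exampleKernel 0 A)
          + (exampleKernel 0 Aᶜ - exampleKernel x Aᶜ)) A hA
      rw [hval1, hval2] at hle
      exact hle
  rw [key]
  have hadd : Pp + Pm = ∫⁻ y, ENNReal.ofReal |exDens x y - 1| ∂ν := by
    rw [hPp, hPm, ← lintegral_add_left (by fun_prop)]
    congr 1 with y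
    rw [show (1 : ℝ) - exDens x y = -(exDens x y - 1) by ring]
    exact ofReal_add_ofReal_neg _
  rw [hadd, ← ofReal_integral_eq_lintegral_ofReal]
  · exact ((exDens_continuous x).sub continuous_const).abs.integrableOn_Icc
  · exact Eventually.of_forall fun y => abs_nonneg _

lemma tendsto_tv_integral :
    Tendsto (fun x => ∫ y in Set.Icc (0:ℝ) 1, |exDens x y - 1|)
      (𝓝[>] (0:ℝ)) (𝓝 (2 / Real.pi)) := by
  have hvol : (volume (Set.Icc (0:ℝ) 1)).toReal = 1 := by
    simp [Real.volume_Icc]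
  have hA : Tendsto (fun x : ℝ => ∫ y in Set.Icc (0:ℝ) 1, |Real.sin (y/x)|)
      (𝓝[>] (0:ℝ)) (𝓝 (2 / Real.pi)) := by
    apply tendsto_avg_abs_sin.congr'
    filter_upwards [self_mem_nhdsWithin] with x hx
    have hx0 : (0:ℝ) < x := hx
    have : ∫ y in Set.Icc (0:ℝ) 1, |Real.sin (y/x)|
        = x * ∫ u in (0:ℝ)..(1/x), |Real.sin u| := by
      rw [MeasureTheory.integral_Icc_eq_integral_Ioc,
        ← intervalIntegral.integral_of_le zero_le_one,
        intervalIntegral.integral_comp_div (f := fun u => |Real.sin u|) hx0.ne']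
      norm_num
    rw [this]
  have hCa : Tendsto (fun x => |exC x - 1|) (𝓝[>] (0:ℝ)) (𝓝 0) := by
    have := (exC_tendsto.sub (tendsto_const_nhds (x := (1:ℝ)))).abs
    simpa using this
  have hlo : Tendsto (fun x => exC x * (∫ y in Set.Icc (0:ℝ) 1, |Real.sin (y/x)|)
      - |exC x - 1|) (𝓝[>] (0:ℝ)) (𝓝 (2 / Real.pi)) := by
    have := (exC_tendsto.mul hA).sub hCa
    simpa using this
  have hhi : Tendsto (fun x => exC x * (∫ y in Set.Icc (0:ℝ) 1, |Real.sin (y/x)|)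
      + |exC x - 1|) (𝓝[>] (0:ℝ)) (𝓝 (2 / Real.pi)) := by
    have := (exC_tendsto.mul hA).add hCa
    simpa using this
  refine tendsto_of_tendsto_of_tendsto_of_le_of_le' hlo hhi ?_ ?_
  · filter_upwards [self_mem_nhdsWithin] with x hx
    have hx0 : (0:ℝ) < x := hx
    have i1 : IntegrableOn (fun y => |exDens x y - 1|) (Set.Icc (0:ℝ) 1) volume :=
      ((exDens_continuous x).sub continuous_const).abs.integrableOn_Icc
    have i2 : IntegrableOn (fun y => exC x * |Real.sin (y/x)| - |exC x - 1|)
        (Set.Icc (0:ℝ) 1) volume := by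
      apply Continuous.integrableOn_Icc
      fun_prop
    have hmono := integral_mono (μ := volume.restrict (Set.Icc (0:ℝ) 1)) i2 i1 ?_
    · have i3 : IntegrableOn (fun y => exC x * |Real.sin (y/x)|)
          (Set.Icc (0:ℝ) 1) volume := by
        apply Continuous.integrableOn_Icc; fun_prop
      rw [integral_sub i3 (integrable_const _), integral_const_mul,
        setIntegral_const, measureReal_def, hvol, smul_eq_mul, one_mul] at hmono
      exact hmono
    · intro y
      have key : exDens x y - 1 = exC x * Real.sin (y/x) + (exC x - 1) := by
        rw [exDens_eq]; ring
      have h1 : |exC x * Real.sin (y/x)| = exC x * |Real.sin (y/x)| := by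
        rw [abs_mul, abs_of_nonneg (exC_pos hx0.le).le]
      have h2 : |exC x * Real.sin (y/x)| - |exC x - 1| ≤ |exDens x y - 1| := by
        rw [key]
        have := abs_add_le (exC x * Real.sin (y/x) + (exC x - 1)) (-(exC x - 1))
        simp only [add_neg_cancel_right, abs_neg] at this
        linarith
      simp only
      linarith [h2, h1.symm.le, h1.le]
  · filter_upwards [self_mem_nhdsWithin] with x hx
    have hx0 : (0:ℝ) < x := hx
    have i1 : IntegrableOn (fun y => |exDens x y - 1|) (Set.Icc (0:ℝ) 1) volume :=
      ((exDens_continuous x).sub continuous_const).abs.integrableOn_Icc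
    have i2 : IntegrableOn (fun y => exC x * |Real.sin (y/x)| + |exC x - 1|)
        (Set.Icc (0:ℝ) 1) volume := by
      apply Continuous.integrableOn_Icc
      fun_prop
    have hmono := integral_mono (μ := volume.restrict (Set.Icc (0:ℝ) 1)) i1 i2 ?_
    · have i3 : IntegrableOn (fun y => exC x * |Real.sin (y/x)|)
          (Set.Icc (0:ℝ) 1) volume := by
        apply Continuous.integrableOn_Icc; fun_prop
      rw [integral_add i3 (integrable_const _), integral_const_mul,
        setIntegral_const, measureReal_def, hvol, smul_eq_mul, one_mul] at hmono
      exact hmono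
    · intro y
      have key : exDens x y - 1 = exC x * Real.sin (y/x) + (exC x - 1) := by
        rw [exDens_eq]; ring
      have h1 : |exC x * Real.sin (y/x)| = exC x * |Real.sin (y/x)| := by
        rw [abs_mul, abs_of_nonneg (exC_pos hx0.le).le]
      have h2 : |exDens x y - 1| ≤ |exC x * Real.sin (y/x)| + |exC x - 1| := by
        rw [key]
        exact abs_add_le _ _
      simp only
      linarith [h1.le, h1.symm.le]

lemma exampleKernel_integral_rep (f : ℝ → ℝ) {x : ℝ} (hx : 0 < x) :
    ∫ y, f y ∂(exampleKernel x) = ∫ y in Set.Icc (0:ℝ) 1, exDens x y * f y := by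
  rw [exampleKernel_ne x hx.ne']
  simp_rw [ENNReal.ofReal]
  rw [integral_withDensity_eq_integral_smul
    ((exDens_continuous x).measurable.real_toNNReal) f]
  congr 1 with y
  simp [NNReal.smul_def, Real.coe_toNNReal _ (exDens_nonneg hx.le y)]

lemma strongFeller (f : ℝ → ℝ) (hf : Measurable f) (C : ℝ) (hC : ∀ y, |f y| ≤ C) :
    ContinuousOn (fun x => ∫ y, f y ∂(exampleKernel x)) (Set.Icc 0 1) := by
  set ν : Measure ℝ := volume.restrict (Set.Icc 0 1) with hν
  have hC0 : 0 ≤ C := le_trans (abs_nonneg _) (hC 0)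
  have hfm : AEStronglyMeasurable f ν := hf.aestronglyMeasurable
  have hνfin : IsFiniteMeasure ν := by
    constructor
    rw [hν, Measure.restrict_apply_univ, Real.volume_Icc]
    exact ENNReal.ofReal_lt_top
  have hfint : Integrable f ν := by
    apply Integrable.mono' (integrable_const C) hfm
    exact ae_of_all _ fun y => by simpa [Real.norm_eq_abs] using hC y
  intro x₀ hx₀
  rcases hx₀.1.eq_or_lt with h0 | h0pos
  · -- continuity at 0
    subst h0
    show Tendsto _ (𝓝[Set.Icc 0 1] 0) (𝓝 _)
    have hF0 : ∫ y, f y ∂(exampleKernel 0) = ∫ y, f y ∂ν := by rw [exampleKernel_zero]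
    beta_reduce
    rw [hF0]
    have hIcc : Set.Icc (0:ℝ) 1 = {0} ∪ Set.Ioc 0 1 := by
      ext t
      simp only [Set.mem_Icc, Set.mem_union, Set.mem_singleton_iff, Set.mem_Ioc]
      constructor
      · rintro ⟨h1, h2⟩
        rcases h1.eq_or_lt with h | h
        · exact Or.inl h.symm
        · exact Or.inr ⟨h, h2⟩
      · rintro (rfl | ⟨h1, h2⟩)
        · exact ⟨le_refl 0, zero_le_one⟩
        · exact ⟨h1.le, h2⟩
    rw [hIcc, nhdsWithin_union, tendsto_sup]
    constructor
    · rw [nhdsWithin_singleton]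
      have := tendsto_pure_nhds (fun x => ∫ y, f y ∂(exampleKernel x)) 0
      rwa [hF0] at this
    · apply Tendsto.mono_left _ (nhdsWithin_mono 0 Set.Ioc_subset_Ioi_self)
      have hsin_int : ∀ x : ℝ, Integrable (fun y => f y * Real.sin (y/x)) ν := by
        intro x
        apply Integrable.mono' (integrable_const C)
          (hfm.mul (Continuous.aestronglyMeasurable (by fun_prop)))
        apply ae_of_all
        intro y
        simp only [Pi.mul_apply]
        rw [Real.norm_eq_abs, abs_mul]
        calc |f y| * |Real.sin (y/x)| ≤ C * 1 :=
              mul_le_mul (hC y) (Real.abs_sin_le_one _) (abs_nonneg _) hC0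
          _ = C := mul_one C
      have hsin : Tendsto (fun x => ∫ y, f y * Real.sin (y/x) ∂ν) (𝓝[>] (0:ℝ)) (𝓝 0) := by
        have hind : Integrable (Set.indicator (Set.Icc (0:ℝ) 1) f) volume := by
          rw [integrable_indicator_iff measurableSet_Icc]
          exact hfint
        have h := rl_sin_div (Set.indicator (Set.Icc (0:ℝ) 1) f) hind
        apply h.congr
        intro x
        rw [show (fun v => Set.indicator (Set.Icc (0:ℝ) 1) f v * Real.sin (v/x))
            = Set.indicator (Set.Icc (0:ℝ) 1) (fun v => f v * Real.sin (v/x)) by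
          funext v
          simp [Set.indicator_apply, ite_mul]]
        rw [integral_indicator measurableSet_Icc]
      have hcomb : Tendsto (fun x => exC x * (∫ y, f y ∂ν)
          + exC x * ∫ y, f y * Real.sin (y/x) ∂ν) (𝓝[>] (0:ℝ)) (𝓝 (∫ y, f y ∂ν)) := by
        have := (exC_tendsto.mul_const (∫ y, f y ∂ν)).add (exC_tendsto.mul hsin)
        simpa using this
      apply Tendsto.congr' _ hcomb
      filter_upwards [self_mem_nhdsWithin] with x hx
      have hx0 : (0:ℝ) < x := hx
      rw [exampleKernel_integral_rep f hx0]
      have hpt : ∀ y, exDens x y * f y = exC x * f y + exC x * (f y * Real.sin (y/x)) :=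
        fun y => by rw [exDens_eq]; ring
      calc exC x * (∫ y, f y ∂ν) + exC x * ∫ y, f y * Real.sin (y/x) ∂ν
          = ∫ y, (exC x * f y + exC x * (f y * Real.sin (y/x))) ∂ν := by
            rw [integral_add (hfint.const_mul _) ((hsin_int x).const_mul _),
              integral_const_mul, integral_const_mul]
        _ = ∫ y, exDens x y * f y ∂ν :=
            integral_congr_ae (ae_of_all _ fun y => (hpt y).symm)
  · -- continuity at x₀ > 0
    have hx0ne : x₀ ≠ 0 := h0pos.ne'
    show Tendsto _ (𝓝[Set.Icc 0 1] x₀) (𝓝 _)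
    have hev : ∀ᶠ x in 𝓝[Set.Icc 0 1] x₀, 0 < x :=
      (eventually_gt_nhds h0pos).filter_mono nhdsWithin_le_nhds
    have key : Tendsto (fun x => ∫ y, exDens x y * f y ∂ν) (𝓝[Set.Icc 0 1] x₀)
        (𝓝 (∫ y, exDens x₀ y * f y ∂ν)) := by
      apply tendsto_integral_filter_of_dominated_convergence (bound := fun _ => 2 * C)
      · exact Eventually.of_forall fun x =>
          ((exDens_continuous x).aestronglyMeasurable.mul hfm)
      · filter_upwards [hev] with x hx
        apply ae_of_all
        intro y
        rw [Real.norm_eq_abs, abs_mul]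
        have h2 : |exDens x y| ≤ 2 := by
          rw [abs_of_nonneg (exDens_nonneg hx.le y)]
          exact exDens_le_two hx.le y
        exact mul_le_mul h2 (hC y) (abs_nonneg _) (by norm_num)
      · exact integrable_const _
      · apply ae_of_all
        intro y
        apply Tendsto.mul_const
        exact ((exDens_continuousAt y hx0ne h0pos.le).tendsto).mono_left nhdsWithin_le_nhds
    have heq : (fun x => ∫ y, exDens x y * f y ∂ν)
        =ᶠ[𝓝[Set.Icc 0 1] x₀] (fun x => ∫ y, f y ∂(exampleKernel x)) := by
      filter_upwards [hev] with x hx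
      exact (exampleKernel_integral_rep f hx).symm
    have hx₀eq : ∫ y, f y ∂(exampleKernel x₀) = ∫ y, exDens x₀ y * f y ∂ν :=
      exampleKernel_integral_rep f h0pos
    beta_reduce
    rw [hx₀eq]
    exact key.congr' heq

/-- The kernel `P(x,dy) = c(x)(1 + sin(y/x)) dy` on `[0,1]` (with `P(0,·)` the Lebesgue
measure) is a Markov kernel which is strong Feller, but
`lim_{x→0+} ‖P(x,·) − P(0,·)‖_TV = 2/π`; in particular it is not ultra Feller. -/
theorem exampleKernel_strongFeller_not_ultraFeller :
    (∀ x ∈ Set.Icc (0 : ℝ) 1, IsProbabilityMeasure (exampleKernel x)) ∧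
    (∀ f : ℝ → ℝ, Measurable f → (∃ C, ∀ y, |f y| ≤ C) →
      ContinuousOn (fun x => ∫ y, f y ∂(exampleKernel x)) (Set.Icc 0 1)) ∧
    Tendsto (fun x => tvDist (exampleKernel x) (exampleKernel 0)) (𝓝[>] 0)
      (𝓝 (ENNReal.ofReal (2 / Real.pi))) ∧
    ¬ Tendsto (fun x => tvDist (exampleKernel x) (exampleKernel 0)) (𝓝[>] 0) (𝓝 0) := by
  have h3 : Tendsto (fun x => tvDist (exampleKernel x) (exampleKernel 0)) (𝓝[>] 0)
      (𝓝 (ENNReal.ofReal (2 / Real.pi))) := by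
    have h := (ENNReal.continuous_ofReal.tendsto (2 / Real.pi)).comp tendsto_tv_integral
    apply h.congr'
    filter_upwards [self_mem_nhdsWithin] with x hx
    have hx0 : (0:ℝ) < x := hx
    exact (tvDist_eq hx0).symm
  refine ⟨prob, ?_, h3, ?_⟩
  · rintro f hf ⟨C, hC⟩
    exact strongFeller f hf C hC
  · intro h
    have huniq := tendsto_nhds_unique h3 h
    rw [ENNReal.ofReal_eq_zero] at huniq
    have hpi := Real.pi_pos
    have : (0:ℝ) < 2 / Real.pi := by positivity
    linarith
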